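/- arXiv:1612.08146 — 4 statements merged into one kernel-verified Lean document; each statement's English description precedes it below -/
import Mathlib

section
/- For every integer k ≥ 1, the Motzkin number M_{7^k - 2} is congruent to 0 modulo 7. -/
open Finset PowerSeries

def motzkin (n : ℕ) : ℕ := ∑ k ∈ Finset.range (n + 1), n.choose (2 * k) * catalan k

lemma hockey (n a : ℕ) : ∑ p ∈ range (n + 1), p.choose a = (n + 1).choose (a + 1) := by
  induction n with
  | zero =>
    rw [Finset.sum_range_one]
    cases a with
    | zero => rfl
    | succ a => simp [Nat.choose_eq_zero_of_lt]
  | succ n ih =>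
    rw [Finset.sum_range_succ, ih, Nat.choose_succ_succ (n + 1) a, Nat.add_comm]

lemma conv_choose (n : ℕ) : ∀ a b : ℕ,
    ∑ p ∈ range (n + 1), p.choose a * (n - p).choose b = (n + 1).choose (a + b + 1) := by
  induction n with
  | zero =>
    intro a b
    rw [Finset.sum_range_one]
    cases a with
    | zero =>
      cases b with
      | zero => rfl
      | succ b => simp [Nat.choose_eq_zero_of_lt]
    | succ a => simp [Nat.choose_eq_zero_of_lt, Nat.succ_lt_succ]
  | succ n ih =>
    intro a b
    cases b with
    | zero =>
      simp only [Nat.choose_zero_right, mul_one]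
      rw [hockey]
    | succ b =>
      rw [Finset.sum_range_succ]
      have h0 : (n + 1 - (n + 1)).choose (b + 1) = 0 := by simp
      rw [h0, mul_zero, add_zero]
      have h2 : a + (b + 1) + 1 = (a + b + 1) + 1 := by ring
      have hcong : ∑ p ∈ range (n + 1), p.choose a * (n + 1 - p).choose (b + 1)
          = ∑ p ∈ range (n + 1), (p.choose a * (n - p).choose b
              + p.choose a * (n - p).choose (b + 1)) := by
        apply Finset.sum_congr rfl
        intro p hp
        have : n + 1 - p = (n - p) + 1 := by
          simp only [mem_range] at hp; omega
        rw [this, Nat.choose_succ_succ, Nat.mul_add]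
      rw [hcong, Finset.sum_add_distrib, ih a b, ih a (b + 1), h2]
      conv_rhs => rw [Nat.choose_succ_succ]

lemma motzkin_succ (n : ℕ) : motzkin (n + 1)
    = motzkin n + ∑ k ∈ range (n + 1), n.choose (2 * k + 1) * catalan (k + 1) := by
  unfold motzkin
  rw [Finset.sum_range_succ' (fun k => (n+1).choose (2 * k) * catalan k) (n+1)]
  have hterm : ∀ k ∈ range (n + 1),
      (n+1).choose (2 * (k + 1)) * catalan (k + 1)
      = n.choose (2 * k + 1) * catalan (k + 1) + n.choose (2 * (k+1)) * catalan (k + 1) := by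
    intro k _
    have h2 : 2 * (k + 1) = (2 * k + 1) + 1 := by ring
    rw [h2, Nat.choose_succ_succ, Nat.add_mul]
  rw [Finset.sum_congr rfl hterm, Finset.sum_add_distrib]
  have e2 := Finset.sum_range_succ' (fun k => n.choose (2 * k) * catalan k) (n+1)
  rw [Finset.sum_range_succ (fun k => n.choose (2 * k) * catalan k) (n+1)] at e2
  have hz : n.choose (2 * (n+1)) * catalan (n+1) = 0 := by
    rw [Nat.choose_eq_zero_of_lt (by omega), zero_mul]
  simp only [hz, add_zero, Nat.mul_zero, Nat.choose_zero_right, catalan_zero, mul_one] at e2 ⊢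
  omega

lemma motzkin_conv (n : ℕ) :
    ∑ i ∈ range (n + 1), motzkin i * motzkin (n - i)
    = ∑ m ∈ range (n + 1), (n+1).choose (2 * m + 1) * catalan (m + 1) := by
  have hext : ∀ i, i ≤ n → motzkin i = ∑ a ∈ range (n + 1), i.choose (2 * a) * catalan a := by
    intro i hi
    unfold motzkin
    apply Finset.sum_subset
    · intro a ha; simp only [mem_range] at *; omega
    · intro a _ ha
      simp only [mem_range, not_lt] at ha
      rw [Nat.choose_eq_zero_of_lt (by omega), zero_mul]
  have step1 : ∑ i ∈ range (n + 1), motzkin i * motzkin (n - i)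
      = ∑ a ∈ range (n+1), ∑ b ∈ range (n+1),
          catalan a * catalan b * (n+1).choose (2*a + 2*b + 1) := by
    rw [Finset.sum_congr rfl (fun i hi => by
      rw [hext i (by simpa [Nat.lt_succ_iff] using hi), hext (n - i) (by omega),
        Finset.sum_mul_sum])]
    rw [Finset.sum_comm]
    apply Finset.sum_congr rfl
    intro a _
    rw [Finset.sum_comm]
    apply Finset.sum_congr rfl
    intro b _
    rw [← conv_choose n (2*a) (2*b), Finset.mul_sum]
    apply Finset.sum_congr rfl
    intro i _
    ring
  rw [step1]
  have hrhs : ∑ m ∈ range (n + 1), (n+1).choose (2 * m + 1) * catalan (m + 1)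
      = ∑ m ∈ range (n+1), ∑ ij ∈ Finset.HasAntidiagonal.antidiagonal m,
          catalan ij.1 * catalan ij.2 * (n+1).choose (2*ij.1 + 2*ij.2 + 1) := by
    apply Finset.sum_congr rfl
    intro m _
    rw [catalan_succ', Finset.mul_sum]
    apply Finset.sum_congr rfl
    intro ij hij
    have hm : ij.1 + ij.2 = m := Finset.HasAntidiagonal.mem_antidiagonal.mp hij
    have : 2 * m + 1 = 2 * ij.1 + 2 * ij.2 + 1 := by omega
    rw [this]; ring
  rw [hrhs]
  -- biUnion step
  have hdisj : (↑(range (n+1)) : Set ℕ).PairwiseDisjoint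
      (fun m => (Finset.HasAntidiagonal.antidiagonal m : Finset (ℕ × ℕ))) := by
    intro x _ y _ hxy
    simp only [Function.onFun, Finset.disjoint_left]
    intro p hpx hpy
    exact hxy ((Finset.HasAntidiagonal.mem_antidiagonal.mp hpx).symm.trans (Finset.HasAntidiagonal.mem_antidiagonal.mp hpy))
  rw [← Finset.sum_biUnion hdisj, ← Finset.sum_product']
  refine (Finset.sum_subset ?_ ?_).symm
  · intro p hp
    rw [Finset.mem_biUnion] at hp
    obtain ⟨m, hm, hpm⟩ := hp
    have := Finset.HasAntidiagonal.mem_antidiagonal.mp hpm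
    simp only [mem_range] at hm
    simp only [Finset.mem_product, mem_range]
    omega
  · intro p hp hnp
    simp only [Finset.mem_product, mem_range] at hp
    have hgt : n < p.1 + p.2 := by
      by_contra hle
      push_neg at hle
      exact hnp (Finset.mem_biUnion.mpr ⟨p.1 + p.2, Finset.mem_range.mpr (by omega),
        Finset.HasAntidiagonal.mem_antidiagonal.mpr rfl⟩)
    rw [Nat.choose_eq_zero_of_lt (by omega), mul_zero]

lemma motzkin_rec (n : ℕ) : motzkin (n + 2)
    = motzkin (n + 1) + ∑ i ∈ range (n + 1), motzkin i * motzkin (n - i) := by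
  rw [motzkin_succ (n+1), motzkin_conv]
  congr 1
  rw [Finset.sum_range_succ]
  have hz : (n+1).choose (2 * (n+1) + 1) * catalan (n+1+1) = 0 := by
    rw [Nat.choose_eq_zero_of_lt (by omega), zero_mul]
  rw [hz, add_zero]

noncomputable section
abbrev R7 := ZMod 7

instance : Fact (Nat.Prime 7) := ⟨by norm_num⟩

def G : R7⟦X⟧ := PowerSeries.mk fun n => (motzkin n : R7)

lemma motzkin_zero : motzkin 0 = 1 := by unfold motzkin; simp
lemma motzkin_one : motzkin 1 = 1 := by
  unfold motzkin
  rw [Finset.sum_range_succ, Finset.sum_range_one]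
  simp [catalan_zero, catalan_one, Nat.choose_eq_zero_of_lt]

lemma G_eq : G = 1 + X * G + X * (X * (G * G)) := by
  ext n
  rcases n with _ | _ | n
  · simp [G, coeff_mk, motzkin_zero]
  · simp only [map_add, coeff_succ_X_mul, coeff_one, G, coeff_mk, motzkin_one]
    simp [coeff_zero_eq_constantCoeff, motzkin_zero, motzkin_one]
  · simp only [map_add, coeff_succ_X_mul, coeff_one, G, coeff_mk]
    rw [PowerSeries.coeff_mul]
    rw [Finset.Nat.sum_antidiagonal_eq_sum_range_succ_mk]
    simp only [coeff_mk]
    rw [motzkin_rec n]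
    push_cast
    simp

def dd : R7⟦X⟧ := 1 - 2 * X - 3 * X ^ 2
def H : R7⟦X⟧ := 1 - X - 2 * (X ^ 2 * G)

lemma H_sq : H * H = dd := by
  have h := G_eq
  unfold H dd
  linear_combination (-4 * (X:R7⟦X⟧)^2) * h

lemma coeff_pow_seven (f : R7⟦X⟧) (m : ℕ) :
    (coeff m) (f ^ 7) = if 7 ∣ m then (coeff (m / 7)) f else 0 := by
  set t : Polynomial R7 := trunc (m + 1) f with ht
  have h1 : (X : R7⟦X⟧) ^ (m + 1) ∣ f - ↑t := by
    rw [X_pow_dvd_iff]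
    intro i hi
    rw [map_sub, Polynomial.coeff_coe, ht, coeff_trunc, if_pos hi, sub_self]
  have h2 : (X : R7⟦X⟧) ^ (m + 1) ∣ f ^ 7 - (↑t : R7⟦X⟧) ^ 7 :=
    dvd_trans h1 (sub_dvd_pow_sub_pow f (↑t) 7)
  have h3 : (coeff m) (f ^ 7) = (coeff m) ((↑t : R7⟦X⟧) ^ 7) := by
    have := (X_pow_dvd_iff.mp h2) m (Nat.lt_succ_self m)
    rw [map_sub] at this
    exact sub_eq_zero.mp this
  rw [h3]
  have h4 : (t : Polynomial R7) ^ 7 = Polynomial.expand R7 7 t := by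
    exact (ZMod.expand_card t).symm
  rw [← Polynomial.coe_pow, h4, Polynomial.coeff_coe, Polynomial.coeff_expand (by norm_num : 0 < 7)]
  split
  · next hdvd =>
    rw [ht, coeff_trunc, if_pos (by omega : m / 7 < m + 1)]
  · rfl

def lam (f : R7⟦X⟧) : R7⟦X⟧ := PowerSeries.mk fun n => (coeff (7 * n)) f

lemma coeff_lam (f : R7⟦X⟧) (n : ℕ) : (coeff n) (lam f) = (coeff (7 * n)) f := coeff_mk _ _

lemma sum_mult7 (t : ℕ → R7) (n : ℕ) (ht : ∀ i, ¬ 7 ∣ i → t i = 0) :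
    ∑ i ∈ range (7 * n + 1), t i = ∑ j ∈ range (n + 1), t (7 * j) := by
  rw [← Finset.sum_image (g := fun j => 7 * j)
    (fun x _ y _ h => Nat.eq_of_mul_eq_mul_left (by norm_num) h)]
  apply (Finset.sum_subset ?_ ?_).symm
  · intro i hi
    rw [Finset.mem_image] at hi
    obtain ⟨j, hj, rfl⟩ := hi
    simp only [mem_range] at *
    omega
  · intro i hi hni
    apply ht
    rintro ⟨j, rfl⟩
    apply hni
    simp only [mem_range] at hi
    exact Finset.mem_image.mpr ⟨j, Finset.mem_range.mpr (by omega), rfl⟩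

lemma lam_mul_pow (g f : R7⟦X⟧) : lam (g ^ 7 * f) = g * lam f := by
  ext n
  rw [coeff_lam, PowerSeries.coeff_mul, PowerSeries.coeff_mul,
    Finset.Nat.sum_antidiagonal_eq_sum_range_succ_mk,
    Finset.Nat.sum_antidiagonal_eq_sum_range_succ_mk]
  rw [sum_mult7 (fun i => (coeff i) (g ^ 7) * (coeff (7 * n - i)) f) n
    (fun i hi => by show (coeff i) (g ^ 7) * _ = 0; rw [coeff_pow_seven, if_neg hi, zero_mul])]
  apply Finset.sum_congr rfl
  intro j hj
  simp only [mem_range] at hj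
  rw [coeff_pow_seven, if_pos ⟨j, rfl⟩, Nat.mul_div_cancel_left _ (by norm_num : 0 < 7),
    coeff_lam]
  rw [show 7 * n - 7 * j = 7 * (n - j) from by omega]

def pser (l : List R7) : R7⟦X⟧ := PowerSeries.mk fun n => l.getD n 0

lemma coeff_pser (l : List R7) (n : ℕ) : (coeff n) (pser l) = l.getD n 0 := coeff_mk _ _

lemma mk_mul (a b : ℕ → R7) : (PowerSeries.mk a) * (PowerSeries.mk b)
    = PowerSeries.mk (fun n => ∑ i ∈ range (n + 1), a i * b (n - i)) := by
  ext n
  rw [PowerSeries.coeff_mul, Finset.Nat.sum_antidiagonal_eq_sum_range_succ_mk, coeff_mk]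
  simp only [coeff_mk]

lemma pser_mul (a b c : List R7) (hlen : a.length + b.length ≤ c.length + 1)
    (h : ∀ n < c.length, ∑ i ∈ range (n + 1), a.getD i 0 * b.getD (n - i) 0 = c.getD n 0) :
    pser a * pser b = pser c := by
  unfold pser
  rw [mk_mul]
  ext n
  rw [coeff_mk, coeff_mk]
  rcases lt_or_ge n c.length with hn | hn
  · exact h n hn
  · rw [List.getD_eq_default _ _ hn]
    apply Finset.sum_eq_zero
    intro i _
    rcases lt_or_ge i a.length with hia | hia
    · rw [List.getD_eq_default (n := n - i) _ _ (by omega), mul_zero]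
    · rw [List.getD_eq_default _ _ hia, zero_mul]

def Ld : List R7 := [1, 5, 4]
def Ld2 : List R7 := [1, 3, 5, 5, 2]
def Ld3 : List R7 := [1, 1, 3, 0, 5, 2, 1]
def Ld6 : List R7 := [1, 2, 0, 6, 5, 0, 1, 0, 3, 6, 0, 4, 1]
def Ld12 : List R7 := [1, 4, 4, 5, 6, 6, 3, 1, 3, 1, 6, 2, 2, 1, 5, 1, 5, 2, 3, 3, 5, 5, 2, 1, 1]
def Ld18 : List R7 := [1, 6, 5, 5, 3, 6, 3, 2, 1, 1, 1, 2, 4, 2, 2, 0, 4, 4, 1, 2, 1, 0, 1, 4, 4, 1, 2, 1, 4, 4, 3, 3, 6, 5, 6, 5, 1]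
def Lq : List R7 := [1, 2, 2, 0, 4, 5]
def Lqd12 : List R7 := [1, 6, 0, 0, 0, 0, 0, 3, 4, 0, 0, 0, 0, 0, 5, 2, 0, 0, 0, 0, 0, 5, 2, 0, 0, 0, 0, 0, 2, 5]
def Lqd15 : List R7 := [1, 0, 2, 4, 5, 4, 6, 2, 0, 6, 5, 1, 5, 4, 2, 0, 3, 6, 4, 6, 2, 0, 0, 3, 6, 4, 6, 2, 4, 0, 4, 1, 3, 1, 5, 5]

lemma mul_d2 : pser Ld * pser Ld = pser Ld2 := pser_mul _ _ _ (by decide) (by decide)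
lemma mul_d3 : pser Ld2 * pser Ld = pser Ld3 := pser_mul _ _ _ (by decide) (by decide)
lemma mul_d6 : pser Ld3 * pser Ld3 = pser Ld6 := pser_mul _ _ _ (by decide) (by decide)
lemma mul_d12 : pser Ld6 * pser Ld6 = pser Ld12 := pser_mul _ _ _ (by decide) (by decide)
lemma mul_d18 : pser Ld12 * pser Ld6 = pser Ld18 := pser_mul _ _ _ (by decide) (by decide)
lemma mul_qd12 : pser Lq * pser Ld12 = pser Lqd12 := pser_mul _ _ _ (by decide) (by decide)
lemma mul_qd15 : pser Lqd12 * pser Ld3 = pser Lqd15 := pser_mul _ _ _ (by decide) (by decide)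

lemma lam_pser_of (a b : List R7) (hlen : a.length ≤ 7 * b.length)
    (h : ∀ n < b.length, a.getD (7 * n) 0 = b.getD n 0) : lam (pser a) = pser b := by
  ext n
  rw [coeff_lam, coeff_pser, coeff_pser]
  rcases lt_or_ge n b.length with hn | hn
  · exact h n hn
  · rw [List.getD_eq_default _ _ hn, List.getD_eq_default _ _ (by omega)]

lemma lam_d18 : lam (pser Ld18) = pser Lq := lam_pser_of _ _ (by decide) (by decide)
lemma lam_qd15 : lam (pser Lqd15) = pser Lq := lam_pser_of _ _ (by decide) (by decide)

lemma dd_eq : dd = pser Ld := by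
  unfold dd
  rw [← map_ofNat (C (R := R7)) 2, ← map_ofNat (C (R := R7)) 3]
  ext n
  rw [coeff_pser]
  rcases n with _ | _ | _ | n <;>
    simp [map_sub, coeff_one, PowerSeries.coeff_C_mul, PowerSeries.coeff_X,
      PowerSeries.coeff_X_pow, Ld, List.getD] <;> decide

lemma dd3_eq : dd ^ 3 = pser Ld3 := by
  rw [show dd ^ 3 = dd * dd * dd by ring, dd_eq, mul_d2, mul_d3]

lemma dd6_eq : dd ^ 6 = pser Ld6 := by
  rw [show dd ^ 6 = dd ^ 3 * dd ^ 3 by ring, dd3_eq, mul_d6]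

lemma dd12_eq : dd ^ 12 = pser Ld12 := by
  rw [show dd ^ 12 = dd ^ 6 * dd ^ 6 by ring, dd6_eq, mul_d12]

lemma dd18_eq : dd ^ 18 = pser Ld18 := by
  rw [show dd ^ 18 = dd ^ 12 * dd ^ 6 by ring, dd12_eq, dd6_eq, mul_d18]

lemma qd15_eq : pser Lq * dd ^ 15 = pser Lqd15 := by
  rw [show dd ^ 15 = dd ^ 12 * dd ^ 3 by ring, dd12_eq, dd3_eq, ← mul_assoc, mul_qd12, mul_qd15]

lemma dd_unit : (constantCoeff) dd ≠ 0 := by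
  unfold dd
  simp [map_sub, map_ofNat]

lemma coeff_H (m : ℕ) : (coeff (m + 2)) H = -(2 * (motzkin m : R7)) := by
  unfold H
  rw [← map_ofNat (C (R := R7)) 2, map_sub, map_sub, coeff_one, PowerSeries.coeff_X,
    PowerSeries.coeff_C_mul, PowerSeries.coeff_X_pow_mul, G, coeff_mk]
  simp

theorem motzkin_7k_sub_two_mod_seven (k : ℕ) (hk : 1 ≤ k) :
    motzkin (7 ^ k - 2) % 7 = 0 := by
  classical
  -- set up w
  set w : R7⟦X⟧ := H * (dd⁻¹) ^ 3 with hw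
  have hdinv : dd * dd⁻¹ = 1 := PowerSeries.mul_inv_cancel _ dd_unit
  have hwd : w * dd ^ 3 = H := by
    calc w * dd ^ 3 = H * (dd * dd⁻¹) ^ 3 := by rw [hw]; ring
    _ = H := by rw [hdinv, one_pow, mul_one]
  have h7 : H ^ 7 = dd ^ 3 * H := by
    calc H ^ 7 = (H * H) ^ 3 * H := by ring
    _ = dd ^ 3 * H := by rw [H_sq]
  have hw7 : w = dd ^ 15 * w ^ 7 := by
    calc w = H * (dd * dd⁻¹) ^ 18 * dd⁻¹ ^ 3 := by rw [hdinv, one_pow, hw]; ring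
    _ = (dd ^ 3 * H) * dd⁻¹ ^ 21 * dd ^ 15 := by ring
    _ = H ^ 7 * (dd⁻¹ ^ 3) ^ 7 * dd ^ 15 := by rw [h7]; ring
    _ = dd ^ 15 * w ^ 7 := by rw [hw]; ring
  have hHw7 : H = w ^ 7 * dd ^ 18 := by
    calc H = w * dd ^ 3 := hwd.symm
    _ = (dd ^ 15 * w ^ 7) * dd ^ 3 := by rw [← hw7]
    _ = w ^ 7 * dd ^ 18 := by ring
  have lamH : lam H = w * pser Lq := by
    rw [hHw7, dd18_eq, lam_mul_pow, lam_d18]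
  have lamA : lam (w * pser Lq) = w * pser Lq := by
    have h1 : w * pser Lq = w ^ 7 * pser Lqd15 := by
      rw [← qd15_eq]
      calc w * pser Lq = (dd ^ 15 * w ^ 7) * pser Lq := by rw [← hw7]
      _ = w ^ 7 * (pser Lq * dd ^ 15) := by ring
    rw [h1, lam_mul_pow, lam_qd15]
    exact h1
  have claim3 : ∀ j : ℕ, (coeff (7 ^ j)) (w * pser Lq) = (coeff 1) (w * pser Lq) := by
    intro j
    induction j with
    | zero => rfl
    | succ j ih =>
      rw [pow_succ, mul_comm, ← coeff_lam, lamA, ih]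
  have hcoeff1 : (coeff 1) (w * pser Lq) = 0 := by
    rw [← lamH, coeff_lam, show 7 * 1 = 5 + 2 by rfl, coeff_H]
    have h5 : motzkin 5 = 21 := by
      unfold motzkin
      simp [Finset.sum_range_succ, catalan_zero, catalan_one, catalan_two,
        Nat.choose_eq_zero_of_lt]
      decide
    rw [h5]
    decide
  obtain ⟨k, rfl⟩ : ∃ j, k = j + 1 := ⟨k - 1, by omega⟩
  have h7k : (7:ℕ) ^ (k + 1) = (7 ^ (k + 1) - 2) + 2 := by
    have : (7:ℕ) ^ (k + 1) ≥ 7 := by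
      calc (7:ℕ) ^ (k+1) ≥ 7 ^ 1 := Nat.pow_le_pow_right (by norm_num) (by omega)
      _ = 7 := pow_one 7
    omega
  have hfin : (coeff (7 ^ (k + 1))) H = 0 := by
    rw [pow_succ, mul_comm, ← coeff_lam, lamH, claim3, hcoeff1]
  rw [h7k, coeff_H] at hfin
  have h2 : ((motzkin (7 ^ (k+1) - 2) : ℕ) : R7) = 0 := by
    have := neg_eq_zero.mp hfin
    rcases mul_eq_zero.mp this with h | h
    · exact absurd h (by decide)
    · exact h
  have hdvd : (7:ℕ) ∣ motzkin (7 ^ (k+1) - 2) := by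
    exact_mod_cast (ZMod.natCast_eq_zero_iff _ 7).mp h2
  omega
end
end

section
/- The Motzkin number M_n is even if and only if n = (4i + ε)·4^{j+1} − δ for some natural numbers i, j, some ε ∈ {1, 3}, and some δ ∈ {1, 2}. -/
open Finset

lemma catalan_cast_succ (n : ℕ) :
    (catalan (n + 1) : ZMod 2) = if 2 ∣ n then (catalan (n / 2) : ZMod 2) else 0 := by
  have h : (catalan (n+1) : ZMod 2)
      = ∑ i ∈ Finset.range (n+1), (catalan i : ZMod 2) * (catalan (n - i) : ZMod 2) := by
    rw [catalan_succ', Nat.sum_antidiagonal_eq_sum_range_succ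
      (fun x y => catalan x * catalan y) n]
    push_cast
    rfl
  by_cases hn : 2 ∣ n
  · obtain ⟨c, rfl⟩ := hn
    have hc : (2 * c) / 2 = c := by omega
    rw [h, if_pos ⟨c, rfl⟩, hc]
    have hmem : c ∈ Finset.range (2*c+1) := by simp; omega
    rw [← Finset.add_sum_erase _ _ hmem]
    have hz : ∑ i ∈ (Finset.range (2*c+1)).erase c,
        (catalan i : ZMod 2) * (catalan (2*c - i) : ZMod 2) = 0 := by
      apply Finset.sum_involution (fun a _ => 2*c - a)
      · intro a ha
        have ha' : a ≤ 2*c := by simp at ha; omega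
        have : 2*c - (2*c - a) = a := by omega
        rw [this, mul_comm]
        exact CharTwo.add_self_eq_zero _
      · intro a ha _
        simp [Finset.mem_erase] at ha
        omega
      · intro a ha
        simp [Finset.mem_erase] at ha ⊢
        omega
      · intro a ha
        simp [Finset.mem_erase] at ha
        omega
    rw [hz, add_zero]
    have : 2*c - c = c := by omega
    rw [this]
    have := ZMod.pow_card (p := 2) (catalan c : ZMod 2)
    rwa [pow_two] at this
  · rw [h, if_neg hn]
    apply Finset.sum_involution (fun a _ => n - a)
    · intro a ha
      have ha' : a ≤ n := by simp at ha; omega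
      have : n - (n - a) = a := by omega
      rw [this, mul_comm]
      exact CharTwo.add_self_eq_zero _
    · intro a ha _
      simp at ha
      omega
    · intro a ha
      simp at ha ⊢
    · intro a ha
      simp at ha
      omega

open scoped Classical in
lemma catalan_cast (k : ℕ) :
    (catalan k : ZMod 2) = if ∃ m, k + 1 = 2 ^ m then 1 else 0 := by
  induction k using Nat.strong_induction_on with
  | _ k ih =>
    match k with
    | 0 =>
        rw [catalan_zero, if_pos ⟨0, rfl⟩]
        simp
    | (n+1) =>
      rw [catalan_cast_succ]
      by_cases hn : 2 ∣ n
      · rw [if_pos hn, ih (n/2) (by omega)]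
        congr 1
        apply propext
        constructor
        · rintro ⟨m, hm⟩
          refine ⟨m+1, ?_⟩
          rw [pow_succ]
          omega
        · rintro ⟨m, hm⟩
          match m with
          | 0 => omega
          | (m+1) => exact ⟨m, by rw [pow_succ] at hm; omega⟩
      · rw [if_neg hn, if_neg]
        rintro ⟨m, hm⟩
        match m with
        | 0 => omega
        | (m+1) =>
          rw [pow_succ] at hm
          omega


lemma lucas2 (n k : ℕ) : (n.choose k : ZMod 2)
    = ((n % 2).choose (k % 2) : ZMod 2) * ((n / 2).choose (k / 2) : ZMod 2) := by
  haveI : Fact (Nat.Prime 2) := ⟨Nat.prime_two⟩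
  have := Choose.choose_modEq_choose_mod_mul_choose_div_nat (n := n) (k := k) (p := 2)
  rw [← ZMod.natCast_eq_natCast_iff] at this
  push_cast at this
  exact this

lemma choose_pow_sub_one (m b : ℕ) :
    (b.choose (2 ^ m - 1) : ZMod 2) = if 2 ^ m ∣ (b + 1) then 1 else 0 := by
  induction m generalizing b with
  | zero => simp
  | succ m ih =>
    rw [lucas2]
    have hp : 2 ^ (m+1) = 2 * 2^m := by rw [pow_succ]; ring
    have hge : 2^m ≥ 1 := Nat.one_le_two_pow
    have h1 : (2 ^ (m+1) - 1) % 2 = 1 := by omega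
    have h2 : (2 ^ (m+1) - 1) / 2 = 2 ^ m - 1 := by omega
    rw [h1, h2]
    rcases Nat.mod_two_eq_zero_or_one b with hb2 | hb2
    · have hch : Nat.choose 0 1 = 0 := rfl
      rw [hb2, hch, Nat.cast_zero, zero_mul, if_neg]
      intro hdvd
      have h3 : (2:ℕ) ∣ 2 ^ (m+1) := dvd_pow_self 2 (Nat.succ_ne_zero m)
      have := h3.trans hdvd
      omega
    · rw [hb2, Nat.choose_self, Nat.cast_one, one_mul, ih]
      have hb1 : b + 1 = 2 * (b / 2 + 1) := by omega
      have key : 2 ^ (m+1) ∣ (b + 1) ↔ 2 ^ m ∣ (b / 2 + 1) := by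
        rw [hb1, hp, Nat.mul_dvd_mul_iff_left (by norm_num : 0 < 2)]
      rw [if_congr key.symm rfl rfl]

lemma choose_two_mul (n m : ℕ) :
    (n.choose (2 * (2 ^ m - 1)) : ZMod 2) = if 2 ^ m ∣ (n / 2 + 1) then 1 else 0 := by
  rw [lucas2]
  have h1 : (2 * (2^m - 1)) % 2 = 0 := by omega
  have h2 : (2 * (2^m - 1)) / 2 = 2^m - 1 := by omega
  rw [h1, h2, Nat.choose_zero_right, Nat.cast_one, one_mul, choose_pow_sub_one]

open scoped Classical in
lemma motzkin_cast (n : ℕ) :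
    (motzkin n : ZMod 2) = (((n / 2 + 1).factorization 2 + 1 : ℕ) : ZMod 2) := by
  have hb : n / 2 + 1 ≠ 0 := by omega
  have hble : n / 2 + 1 ≤ n + 1 := by omega
  set ν := (n / 2 + 1).factorization 2 with hν
  have hνpow : 2 ^ ν ∣ n / 2 + 1 :=
    (Nat.Prime.pow_dvd_iff_le_factorization Nat.prime_two hb).mpr le_rfl
  have hνle : ν ≤ n := by
    have h1 : 2 ^ ν ≤ n / 2 + 1 := Nat.le_of_dvd (by omega) hνpow
    have h2 : ν < 2 ^ ν := Nat.lt_two_pow_self (n := ν)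
    omega
  have step1 : (motzkin n : ZMod 2)
      = ∑ k ∈ Finset.range (n+1), (n.choose (2*k) : ZMod 2) * (catalan k : ZMod 2) := by
    unfold motzkin; push_cast; rfl
  rw [step1]
  have step2 : ∑ k ∈ Finset.range (n+1), (n.choose (2*k) : ZMod 2) * (catalan k : ZMod 2)
      = ∑ k ∈ (Finset.range (n+1)).filter (fun k => ∃ m, k + 1 = 2 ^ m),
          (n.choose (2*k) : ZMod 2) := by
    rw [Finset.sum_filter]
    apply Finset.sum_congr rfl
    intro k _
    rw [catalan_cast]
    split_ifs <;> simp
  rw [step2]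
  have step3 : ∑ k ∈ (Finset.range (n+1)).filter (fun k => ∃ m, k + 1 = 2 ^ m),
          (n.choose (2*k) : ZMod 2)
      = ∑ m ∈ (Finset.range (n+1)).filter (fun m => 2 ^ m ≤ n + 1),
          (n.choose (2*(2^m - 1)) : ZMod 2) := by
    apply Finset.sum_nbij' (fun k => Nat.log 2 (k+1)) (fun m => 2^m - 1)
    · intro k hk
      simp only [Finset.mem_filter, Finset.mem_range] at hk ⊢
      obtain ⟨hk1, m, hm⟩ := hk
      rw [hm, Nat.log_pow (by norm_num)]
      have := Nat.lt_two_pow_self (n := m)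
      omega
    · intro m hm
      simp only [Finset.mem_filter, Finset.mem_range] at hm ⊢
      have h1 : (1:ℕ) ≤ 2 ^ m := Nat.one_le_two_pow
      exact ⟨by omega, m, by omega⟩
    · intro k hk
      simp only [Finset.mem_filter, Finset.mem_range] at hk
      obtain ⟨hk1, m, hm⟩ := hk
      rw [hm, Nat.log_pow (by norm_num)]
      omega
    · intro m hm
      have h1 : (1:ℕ) ≤ 2 ^ m := Nat.one_le_two_pow
      have h2 : 2^m - 1 + 1 = 2^m := by omega
      rw [h2, Nat.log_pow (by norm_num)]
    · intro k hk
      simp only [Finset.mem_filter, Finset.mem_range] at hk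
      obtain ⟨hk1, m, hm⟩ := hk
      rw [hm, Nat.log_pow (by norm_num)]
      congr 2
      omega
  rw [step3]
  have step4 : ∑ m ∈ (Finset.range (n+1)).filter (fun m => 2 ^ m ≤ n + 1),
          (n.choose (2*(2^m - 1)) : ZMod 2)
      = ∑ m ∈ Finset.range (n+1), (if 2 ^ m ∣ (n / 2 + 1) then (1 : ZMod 2) else 0) := by
    rw [Finset.sum_congr rfl (fun m _ => choose_two_mul n m)]
    apply Finset.sum_subset (Finset.filter_subset _ _)
    intro m hm hm2
    simp only [Finset.mem_filter, Finset.mem_range] at hm hm2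
    rw [if_neg]
    intro hdvd
    have := Nat.le_of_dvd (by omega) hdvd
    have : 2 ^ m ≤ n + 1 := by omega
    exact hm2 ⟨by omega, this⟩
  rw [step4, Finset.sum_boole]
  congr 1
  have : (Finset.range (n+1)).filter (fun m => 2 ^ m ∣ (n / 2 + 1))
      = Finset.range (ν + 1) := by
    ext m
    simp only [Finset.mem_filter, Finset.mem_range]
    rw [Nat.Prime.pow_dvd_iff_le_factorization Nat.prime_two hb, ← hν]
    omega
  rw [this, Finset.card_range]

theorem motzkin_even_iff (n : ℕ) :
    2 ∣ motzkin n ↔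
      ∃ i j ε δ : ℕ, (ε = 1 ∨ ε = 3) ∧ (δ = 1 ∨ δ = 2) ∧
        n + δ = (4 * i + ε) * 4 ^ (j + 1) := by
  rw [← ZMod.natCast_eq_zero_iff, motzkin_cast,
    ZMod.natCast_eq_zero_iff]
  set ν := (n / 2 + 1).factorization 2 with hν
  have hb : n / 2 + 1 ≠ 0 := by omega
  constructor
  · intro hdvd
    obtain ⟨j, hj⟩ : ∃ j, ν = 2 * j + 1 := by
      rcases Nat.even_or_odd ν with h | h
      · exfalso; rcases h with ⟨r, hr⟩; omega
      · rcases h with ⟨r, hr⟩; exact ⟨r, hr⟩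
    set M := (n / 2 + 1) / 2 ^ ν with hM
    have hfact : 2 ^ ν * M = n / 2 + 1 := Nat.ordProj_mul_ordCompl_eq_self _ 2
    have hM2 : ¬ 2 ∣ M := Nat.not_dvd_ordCompl Nat.prime_two hb
    have hModd : M % 2 = 1 := by omega
    refine ⟨M / 4, j, M % 4, 2 - n % 2, by omega, by omega, ?_⟩
    have hM4 : 4 * (M / 4) + M % 4 = M := by omega
    rw [hM4]
    have h4 : (4:ℕ) ^ (j + 1) = 2 ^ (2 * j + 2) := by
      rw [show (4:ℕ) = 2^2 from rfl, ← pow_mul]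
      ring_nf
    rw [h4]
    have key : M * 2 ^ (2*j+2) = 2 * (2 ^ ν * M) := by
      rw [hj]; ring
    have hb2 : 2 * (n / 2 + 1) = n + (2 - n % 2) := by omega
    omega
  · rintro ⟨i, j, ε, δ, hε, hδ, heq⟩
    have h4 : (4:ℕ) ^ (j + 1) = 2 ^ (2 * j + 2) := by
      rw [show (4:ℕ) = 2^2 from rfl, ← pow_mul]
      ring_nf
    set M := 4 * i + ε with hMdef
    have hModd : M % 2 = 1 := by omega
    have key : n + δ = 2 * (2 ^ (2*j+1) * M) := by
      rw [heq, h4]; ring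
    have hMpos : 0 < M := by omega
    have hppos : 0 < 2 ^ (2*j+1) * M := by positivity
    have hsplit : n / 2 + 1 = 2 ^ (2*j+1) * M := by omega
    have hfact : ν = 2*j+1 := by
      rw [hν, hsplit, Nat.factorization_mul (by positivity) (by omega)]
      rw [Nat.Prime.factorization_pow Nat.prime_two]
      simp [Nat.factorization_eq_zero_of_not_dvd (show ¬ 2 ∣ M by omega)]
    rw [hfact]
    omega
end

section
/- The Motzkin number M_n is divisible by 13 if and only if n has one of the forms (13i+1)·13^k − 2 or (13i+12)·13^k − 1, where i, k are natural numbers with k ≥ 1. -/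
open Finset

namespace MotzkinThirteen

open Polynomial

instance fact13 : Fact (Nat.Prime 13) := ⟨by norm_num⟩

def tri : ℕ → ℕ → ℕ
  | 0, 0 => 1
  | 0, _+1 => 0
  | n+1, 0 => tri n 0
  | n+1, 1 => tri n 1 + tri n 0
  | n+1, m+2 => tri n (m+2) + tri n (m+1) + tri n m

lemma coeff_tri (n m : ℕ) : ((1 + X + X^2 : ℕ[X])^n).coeff m = tri n m := by
  induction n generalizing m with
  | zero =>
    cases m with
    | zero => simp [tri]
    | succ m => simp [tri, coeff_one]
  | succ n ih =>
    have hrw : (1 + X + X^2 : ℕ[X])^(n+1)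
        = (1+X+X^2)^n + (1+X+X^2)^n * X^1 + (1+X+X^2)^n * X^2 := by ring
    rw [hrw, coeff_add, coeff_add, coeff_mul_X_pow', coeff_mul_X_pow']
    match m with
    | 0 => simp [tri, ih]
    | 1 => simp [tri, ih]
    | (m+2) => simp [tri, ih]

lemma tri_eq_zero {n m : ℕ} (h : 2*n < m) : tri n m = 0 := by
  induction n generalizing m with
  | zero => match m, h with | (m+1), _ => rfl
  | succ n ih =>
    match m, h with
    | (m+2), h =>
      show tri n (m+2) + tri n (m+1) + tri n m = 0
      rw [ih (by omega), ih (by omega), ih (by omega)]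

noncomputable def f (n m : ℕ) : ZMod 13 := ((1 + X + X^2 : (ZMod 13)[X])^n).coeff m

lemma f_eq (n m : ℕ) : f n m = ((tri n m : ℕ) : ZMod 13) := by
  have hmap : (1 + X + X^2 : (ZMod 13)[X])
      = Polynomial.map (Nat.castRingHom (ZMod 13)) (1 + X + X^2 : ℕ[X]) := by
    simp
  rw [f, hmap, ← Polynomial.map_pow, coeff_map, coeff_tri]
  simp

lemma lucas (a b d e : ℕ) (hd : d ≤ 12) (he : e ≤ 12) :
    f (13*a + d) (13*(b+1) + e) = f a (b+1) * f d e + f a b * f d (e + 13) := by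
  classical
  haveI : Fact (Nat.Prime 13) := ⟨by norm_num⟩
  have hfrob : (1 + X + X^2 : (ZMod 13)[X])^13 = expand (ZMod 13) 13 (1 + X + X^2) := by
    rw [add_pow_char, add_pow_char]
    simp only [map_add, map_one, map_pow, Polynomial.expand_X, one_pow, ← pow_mul]
  have hsplit : (1 + X + X^2 : (ZMod 13)[X])^(13*a + d)
      = expand (ZMod 13) 13 ((1 + X + X^2)^a) * (1 + X + X^2)^d := by
    rw [pow_add, pow_mul, hfrob, ← map_pow]
  have hdeg2 : (1 + X + X^2 : (ZMod 13)[X]).natDegree ≤ 2 := by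
    refine (natDegree_add_le _ _).trans (max_le ((natDegree_add_le _ _).trans (max_le ?_ ?_)) ?_) <;>
      simp [natDegree_X_pow, natDegree_X, natDegree_one]
  have hdeg : ((1 + X + X^2 : (ZMod 13)[X])^d).natDegree ≤ 24 :=
    (natDegree_pow_le_of_le d hdeg2).trans (by omega)
  show ((1 + X + X^2 : (ZMod 13)[X])^(13*a+d)).coeff (13*(b+1)+e) = _
  rw [hsplit, coeff_mul]
  have hsub : ({(13*(b+1), e), (13*b, e+13)} : Finset (ℕ×ℕ)) ⊆ antidiagonal (13*(b+1)+e) := by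
    intro x hx
    simp only [Finset.mem_insert, Finset.mem_singleton] at hx
    rcases hx with rfl | rfl <;> rw [Finset.HasAntidiagonal.mem_antidiagonal] <;> omega
  have hvanish : ∀ x ∈ antidiagonal (13*(b+1)+e),
      x ∉ ({(13*(b+1), e), (13*b, e+13)} : Finset (ℕ×ℕ)) →
      (expand (ZMod 13) 13 ((1+X+X^2 : (ZMod 13)[X])^a)).coeff x.1
        * ((1+X+X^2 : (ZMod 13)[X])^d).coeff x.2 = 0 := by
    rintro ⟨i, j⟩ hmem hnot
    rw [Finset.HasAntidiagonal.mem_antidiagonal] at hmem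
    dsimp only at hmem ⊢
    rw [coeff_expand (by norm_num)]
    split_ifs with hdvd
    · obtain ⟨c, rfl⟩ := hdvd
      rcases lt_or_ge 24 j with hj | hj
      · rw [coeff_eq_zero_of_natDegree_lt (lt_of_le_of_lt hdeg hj), mul_zero]
      · exfalso
        apply hnot
        simp only [Finset.mem_insert, Finset.mem_singleton, Prod.mk.injEq]
        omega
    · rw [zero_mul]
  rw [← Finset.sum_subset hsub hvanish,
    Finset.sum_insert (by simp only [Finset.mem_singleton, Prod.mk.injEq, not_and]; omega),
    Finset.sum_singleton, coeff_expand (by norm_num), coeff_expand (by norm_num),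
    if_pos ⟨b+1, rfl⟩, if_pos ⟨b, rfl⟩,
    Nat.mul_div_cancel_left _ (by norm_num : 0 < 13),
    Nat.mul_div_cancel_left _ (by norm_num : 0 < 13)]
  rfl

lemma coeff_expansion (n m : ℕ) :
    ((1 + X + X^2 : ℕ[X])^n).coeff m
      = ∑ k ∈ range (n+1), (if 2*k ≤ m then (n-k).choose (m - 2*k) else 0) * n.choose k := by
  have h : (1 + X + X^2 : ℕ[X]) = X^2 + (X + 1) := by ring
  rw [h, add_pow, finset_sum_coeff]
  refine Finset.sum_congr rfl fun k _ => ?_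
  rw [← pow_mul, ← C_eq_natCast, coeff_mul_C, mul_comm (X^(2*k) : ℕ[X]) _, coeff_mul_X_pow',
    coeff_X_add_one_pow]
  split_ifs <;> simp

lemma tri_diag (n : ℕ) : tri n n = ∑ k ∈ range (n+1), n.choose (2*k) * (2*k).choose k := by
  rw [← coeff_tri, coeff_expansion]
  refine Finset.sum_congr rfl fun k hk => ?_
  rcases le_or_gt (2*k) n with h | h
  · rw [if_pos h, (by omega : n - 2*k = (n-k) - k), Nat.choose_symm (by omega : k ≤ n - k),
      mul_comm]
    have := Nat.choose_mul (n := n) (k := 2*k) (s := k) (by omega)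
    rw [this, (by omega : 2*k - k = k)]
  · rw [if_neg (by omega), Nat.choose_eq_zero_of_lt h, zero_mul, zero_mul]

lemma tri_diag2 (n : ℕ) :
    tri n (n+2) = ∑ k ∈ range (n+1), n.choose (2*k) * (2*k).choose (k+1) := by
  rw [← coeff_tri, coeff_expansion, Finset.sum_range_succ' _ n]
  rw [Finset.sum_range_succ _ n]
  have hlast : n.choose (2*n) * (2*n).choose (n+1) = 0 := by
    rcases Nat.eq_zero_or_pos n with rfl | hn
    · simp
    · rw [Nat.choose_eq_zero_of_lt (by omega), zero_mul]
  rw [hlast, add_zero]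
  have h0 : (if 2*0 ≤ n+2 then (n-0).choose (n+2 - 2*0) else 0) * n.choose 0 = 0 := by
    rw [if_pos (by omega)]
    simp [Nat.choose_eq_zero_of_lt]
  rw [h0, add_zero]
  refine Finset.sum_congr rfl fun k hk => ?_
  rw [Finset.mem_range] at hk
  rcases le_or_gt (2*k) n with h | h
  · rw [if_pos (by omega)]
    rcases Nat.eq_zero_or_pos k with rfl | hkpos
    · rw [(by omega : n + 2 - 2*(0+1) = n), Nat.choose_eq_zero_of_lt (by omega : n - (0+1) < n),
        zero_mul]
      simp
    · rw [(by omega : n + 2 - 2*(k+1) = (n - (k+1)) - (k-1)),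
        Nat.choose_symm (by omega : k - 1 ≤ n - (k+1)), mul_comm]
      have := Nat.choose_mul (n := n) (k := 2*k) (s := k+1) (by omega)
      rw [this, (by omega : 2*k - (k+1) = k - 1)]
  · rw [if_neg (by omega), Nat.choose_eq_zero_of_lt h, zero_mul, zero_mul]

lemma motzkin_add (n : ℕ) : motzkin n + tri n (n+2) = tri n n := by
  rw [tri_diag, tri_diag2, motzkin, ← Finset.sum_add_distrib]
  refine Finset.sum_congr rfl fun k _ => ?_
  rw [← Nat.mul_add]
  congr 1
  have hA := succ_mul_catalan_eq_centralBinom k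
  have hB := Nat.choose_succ_right_eq (2*k) k
  rw [(by omega : 2*k - k = k)] at hB
  apply Nat.eq_of_mul_eq_mul_left (show 0 < k+1 by omega)
  calc (k+1) * (catalan k + (2*k).choose (k+1))
      = (k+1) * catalan k + (2*k).choose (k+1) * (k+1) := by ring
    _ = (2*k).choose k + (2*k).choose k * k := by
        rw [hA, hB, Nat.centralBinom]
    _ = (k+1) * ((2*k).choose k) := by ring

lemma motzkin_f (n : ℕ) : ((motzkin n : ℕ) : ZMod 13) = f n n - f n (n+2) := by
  have h2 : ((motzkin n : ℕ) : ZMod 13) + ((tri n (n+2) : ℕ) : ZMod 13)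
      = ((tri n n : ℕ) : ZMod 13) := by
    rw [← Nat.cast_add, motzkin_add]
  rw [f_eq, f_eq]
  exact eq_sub_of_add_eq h2

def R0 (n : ℕ) : Prop := ∃ i k : ℕ, n + 1 = (13*i + 1) * 13^k
def R11 (n : ℕ) : Prop := ∃ i k : ℕ, n + 1 = (13*i + 12) * 13^k

lemma R0_low {a d : ℕ} (hd : d ≤ 11) : R0 (13*a + d) ↔ d = 0 := by
  constructor
  · rintro ⟨i, k, h⟩
    cases k with
    | zero => simp at h; omega
    | succ k =>
      have h' : 13*a + d + 1 = ((13*i+1)*13^k)*13 := by rw [h, pow_succ]; ring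
      generalize (13*i+1)*13^k = u at h'
      omega
  · rintro rfl
    exact ⟨a, 0, by ring⟩

lemma R0_high (a : ℕ) : R0 (13*a + 12) ↔ R0 a := by
  constructor
  · rintro ⟨i, k, h⟩
    cases k with
    | zero => exfalso; simp at h; omega
    | succ k =>
      refine ⟨i, k, ?_⟩
      have h' : 13*a + 12 + 1 = ((13*i+1)*13^k)*13 := by rw [h, pow_succ]; ring
      generalize (13*i+1)*13^k = u at h' ⊢
      omega
  · rintro ⟨i, k, h⟩
    refine ⟨i, k+1, ?_⟩
    rw [pow_succ, ← mul_assoc]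
    generalize (13*i+1)*13^k = u at h ⊢
    omega

lemma R11_low {a d : ℕ} (hd : d ≤ 11) : R11 (13*a + d) ↔ d = 11 := by
  constructor
  · rintro ⟨i, k, h⟩
    cases k with
    | zero => simp at h; omega
    | succ k =>
      have h' : 13*a + d + 1 = ((13*i+12)*13^k)*13 := by rw [h, pow_succ]; ring
      generalize (13*i+12)*13^k = u at h'
      omega
  · rintro rfl
    exact ⟨a, 0, by ring⟩

lemma R11_high (a : ℕ) : R11 (13*a + 12) ↔ R11 a := by
  constructor
  · rintro ⟨i, k, h⟩
    cases k with
    | zero => exfalso; simp at h; omega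
    | succ k =>
      refine ⟨i, k, ?_⟩
      have h' : 13*a + 12 + 1 = ((13*i+12)*13^k)*13 := by rw [h, pow_succ]; ring
      generalize (13*i+12)*13^k = u at h' ⊢
      omega
  · rintro ⟨i, k, h⟩
    refine ⟨i, k+1, ?_⟩
    rw [pow_succ, ← mul_assoc]
    generalize (13*i+12)*13^k = u at h ⊢
    omega

lemma key : ∀ n : ℕ, f n n ≠ 0 ∧ (f n (n+1) = 0 ↔ R0 n) ∧ (f n (n+1) = 11 * f n n ↔ R11 n) := by
  intro n
  induction n using Nat.strong_induction_on with
  | _ n ih =>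
  rcases lt_or_ge n 13 with hn | hn
  · have hR0 : ∀ m : ℕ, m ≤ 12 → (R0 m ↔ (m = 0 ∨ m = 12)) := by
      intro m hm
      rcases lt_or_ge m 12 with h | h
      · have h1 := R0_low (a := 0) (d := m) (by omega)
        norm_num at h1
        rw [h1]
        omega
      · have h12 : m = 12 := by omega
        subst h12
        have h1 := R0_high 0
        have h2 := R0_low (a := 0) (d := 0) (by omega)
        norm_num at h1 h2
        simp [h1, h2]
    have hR11 : ∀ m : ℕ, m ≤ 12 → (R11 m ↔ m = 11) := by
      intro m hm
      rcases lt_or_ge m 12 with h | h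
      · have h1 := R11_low (a := 0) (d := m) (by omega)
        norm_num at h1
        exact h1
      · have h12 : m = 12 := by omega
        subst h12
        have h1 := R11_high 0
        have h2 := R11_low (a := 0) (d := 0) (by omega)
        norm_num at h1 h2
        simp [h1, h2]
    interval_cases n <;>
      refine ⟨by rw [f_eq]; decide, ?_, ?_⟩ <;>
      first
        | (rw [hR0 _ (by omega), f_eq]; decide)
        | (rw [hR11 _ (by omega), f_eq, f_eq]; decide)
  · obtain ⟨a, d, ha, hd, hn13⟩ : ∃ a d, 1 ≤ a ∧ d ≤ 12 ∧ n = 13*a + d :=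
      ⟨n/13, n%13, by omega, by omega, by omega⟩
    subst hn13
    obtain ⟨IH1, IH2, IH3⟩ := ih a (by omega)
    have ha' : a - 1 + 1 = a := by omega
    have e1 : f (13*a+d) (13*a+d) = f a a * f d d := by
      have h := lucas a (a-1) d d hd hd
      rw [ha'] at h
      rw [h, f_eq d (d+13), tri_eq_zero (by omega : 2*d < d+13)]
      simp
    rcases lt_or_ge d 12 with hd11 | hd12
    · have e2 : f (13*a+d) (13*a+d+1) = f a a * f d (d+1) := by
        have h := lucas a (a-1) d (d+1) hd (by omega)
        rw [ha', (by omega : 13*a + (d+1) = 13*a+d+1)] at h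
        rw [h, f_eq d (d+1+13), tri_eq_zero (by omega : 2*d < d+1+13)]
        simp
      have hR0' : R0 (13*a+d) ↔ d = 0 := R0_low (by omega)
      have hR11' : R11 (13*a+d) ↔ d = 11 := R11_low (by omega)
      have G1 : (f (13*a+d) (13*a+d) = 0) ↔ ((tri d d : ℕ) : ZMod 13) = 0 := by
        rw [e1, f_eq d d, mul_eq_zero]
        simp [IH1]
      have G2 : (f (13*a+d) (13*a+d+1) = 0) ↔ ((tri d (d+1) : ℕ) : ZMod 13) = 0 := by
        rw [e2, f_eq d (d+1), mul_eq_zero]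
        simp [IH1]
      have G3 : (f (13*a+d) (13*a+d+1) = 11 * f (13*a+d) (13*a+d)) ↔
          ((tri d (d+1) : ℕ) : ZMod 13) = 11 * ((tri d d : ℕ) : ZMod 13) := by
        rw [e2, e1, mul_left_comm 11 (f a a) (f d d), mul_right_inj' IH1, f_eq d (d+1), f_eq d d]
      refine ⟨?_, ?_, ?_⟩
      · rw [Ne, G1]
        interval_cases d <;> decide
      · rw [G2, hR0']
        interval_cases d <;> decide
      · rw [G3, hR11']
        interval_cases d <;> decide
    · have hd' : d = 12 := by omega
      subst hd'
      have e1' : f (13*a+12) (13*a+12) = f a a := by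
        rw [e1, f_eq 12 12, show ((tri 12 12 : ℕ) : ZMod 13) = 1 from by decide, mul_one]
      have e2' : f (13*a+12) (13*a+12+1) = f a (a+1) := by
        have h := lucas a a 12 0 (by norm_num) (by norm_num)
        rw [(by omega : 13*(a+1) + 0 = 13*a+12+1)] at h
        rw [h, f_eq 12 0, f_eq 12 13,
          show ((tri 12 0 : ℕ) : ZMod 13) = 1 from by decide,
          show ((tri 12 13 : ℕ) : ZMod 13) = 0 from by decide]
        ring
      refine ⟨by rw [e1']; exact IH1, ?_, ?_⟩
      · rw [e2', R0_high]
        exact IH2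
      · rw [e2', e1', R11_high]
        exact IH3

lemma not_rhs_of_mod {n : ℕ} (h2 : ¬ (13 ∣ (n+2))) (h1 : ¬ (13 ∣ (n+1))) :
    ¬ ∃ i k : ℕ, 1 ≤ k ∧ (n+2 = (13*i+1)*13^k ∨ n+1 = (13*i+12)*13^k) := by
  rintro ⟨i, k, hk, h | h⟩
  · apply h2
    obtain ⟨k', rfl⟩ : ∃ k', k = k' + 1 := ⟨k-1, by omega⟩
    exact ⟨(13*i+1)*13^k', by rw [h, pow_succ]; ring⟩
  · apply h1
    obtain ⟨k', rfl⟩ : ∃ k', k = k' + 1 := ⟨k-1, by omega⟩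
    exact ⟨(13*i+12)*13^k', by rw [h, pow_succ]; ring⟩

end MotzkinThirteen

open MotzkinThirteen in
theorem motzkin_mod_thirteen (n : ℕ) :
    13 ∣ motzkin n ↔
      ∃ i k : ℕ, 1 ≤ k ∧
        (n + 2 = (13 * i + 1) * 13 ^ k ∨
         n + 1 = (13 * i + 12) * 13 ^ k) := by
  rw [← ZMod.natCast_eq_zero_iff, motzkin_f, sub_eq_zero]
  rcases lt_or_ge n 13 with hn | hn
  · rcases lt_or_ge n 11 with hn10 | hn11
    · refine iff_of_false ?_ (not_rhs_of_mod (by omega) (by omega))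
      interval_cases n <;> rw [f_eq, f_eq] <;> decide
    · rcases (by omega : n = 11 ∨ n = 12) with rfl | rfl
      · refine iff_of_true (by rw [f_eq, f_eq]; decide) ⟨0, 1, le_refl 1, Or.inl (by norm_num)⟩
      · refine iff_of_false (by rw [f_eq, f_eq]; decide) ?_
        rintro ⟨i, k, hk, h | h⟩
        · obtain ⟨k', rfl⟩ : ∃ k', k = k' + 1 := ⟨k-1, by omega⟩
          rw [pow_succ, ← mul_assoc] at h
          generalize (13*i+1)*13^k' = u at h
          omega
        · obtain ⟨k', rfl⟩ : ∃ k', k = k' + 1 := ⟨k-1, by omega⟩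
          rw [pow_succ, ← mul_assoc] at h
          have hu : (13*i+12)*13^k' = 1 := by
            generalize (13*i+12)*13^k' = u at h ⊢
            omega
          have h1 : (1:ℕ) ≤ 13^k' := Nat.one_le_pow _ _ (by norm_num)
          have h2 : 13*i+12 ≤ (13*i+12)*13^k' := Nat.le_mul_of_pos_right _ (by omega)
          omega
  · obtain ⟨a, d, ha, hd, hn13⟩ : ∃ a d, 1 ≤ a ∧ d ≤ 12 ∧ n = 13*a + d :=
      ⟨n/13, n%13, by omega, by omega, by omega⟩
    subst hn13
    obtain ⟨K1, K2, K3⟩ := key a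
    have ha' : a - 1 + 1 = a := by omega
    have e1 : f (13*a+d) (13*a+d) = f a a * f d d := by
      have h := lucas a (a-1) d d hd hd
      rw [ha'] at h
      rw [h, f_eq d (d+13), tri_eq_zero (by omega : 2*d < d+13)]
      simp
    rcases lt_or_ge d 11 with hd10 | hd1112
    · have e3 : f (13*a+d) (13*a+d+2) = f a a * f d (d+2) := by
        have h := lucas a (a-1) d (d+2) hd (by omega)
        rw [ha', (by omega : 13*a + (d+2) = 13*a+d+2)] at h
        rw [h, f_eq d (d+2+13), tri_eq_zero (by omega : 2*d < d+2+13)]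
        simp
      refine iff_of_false ?_ (not_rhs_of_mod (by omega) (by omega))
      rw [e1, e3, mul_right_inj' K1, f_eq d d, f_eq d (d+2)]
      interval_cases d <;> decide
    · rcases (by omega : d = 11 ∨ d = 12) with rfl | rfl
      · have e4 : f (13*a+11) (13*a+11+2) = f a (a+1) + f a a * 4 := by
          have h := lucas a a 11 0 (by norm_num) (by norm_num)
          rw [(by omega : 13*(a+1) + 0 = 13*a+11+2)] at h
          rw [h, f_eq 11 0, f_eq 11 13,
            show ((tri 11 0 : ℕ) : ZMod 13) = 1 from by decide,
            show ((tri 11 13 : ℕ) : ZMod 13) = 4 from by decide]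
          ring
        have e1' : f (13*a+11) (13*a+11) = f a a * 4 := by
          rw [e1, f_eq 11 11, show ((tri 11 11 : ℕ) : ZMod 13) = 4 from by decide]
        rw [e1', e4]
        have hiff : f a a * 4 = f a (a+1) + f a a * 4 ↔ f a (a+1) = 0 := by
          constructor <;> intro h <;> linear_combination -h
        rw [hiff, K2]
        constructor
        · rintro ⟨i, k, h⟩
          refine ⟨i, k+1, by omega, Or.inl ?_⟩
          rw [pow_succ, ← mul_assoc]
          generalize (13*i+1)*13^k = u at h ⊢
          omega
        · rintro ⟨i, k, hk, h | h⟩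
          · obtain ⟨k', rfl⟩ : ∃ k', k = k' + 1 := ⟨k-1, by omega⟩
            rw [pow_succ, ← mul_assoc] at h
            refine ⟨i, k', ?_⟩
            generalize (13*i+1)*13^k' = u at h ⊢
            omega
          · exfalso
            obtain ⟨k', rfl⟩ : ∃ k', k = k' + 1 := ⟨k-1, by omega⟩
            rw [pow_succ, ← mul_assoc] at h
            generalize (13*i+12)*13^k' = u at h
            omega
      · have e5 : f (13*a+12) (13*a+12+2) = f a (a+1) * 12 + f a a * 12 := by
          have h := lucas a a 12 1 (by norm_num) (by norm_num)
          rw [(by omega : 13*(a+1) + 1 = 13*a+12+2)] at h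
          rw [h, f_eq 12 1, f_eq 12 14,
            show ((tri 12 1 : ℕ) : ZMod 13) = 12 from by decide,
            show ((tri 12 14 : ℕ) : ZMod 13) = 12 from by decide]
        have e1' : f (13*a+12) (13*a+12) = f a a := by
          rw [e1, f_eq 12 12, show ((tri 12 12 : ℕ) : ZMod 13) = 1 from by decide, mul_one]
        rw [e1', e5]
        have h13 : (13 : ZMod 13) = 0 := by decide
        have hiff : f a a = f a (a+1) * 12 + f a a * 12 ↔ f a (a+1) = 11 * f a a := by
          constructor <;> intro h <;>
            first
              | linear_combination h + f a (a+1) * h13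
              | linear_combination h - f a (a+1) * h13
        rw [hiff, K3]
        constructor
        · rintro ⟨i, k, h⟩
          refine ⟨i, k+1, by omega, Or.inr ?_⟩
          rw [pow_succ, ← mul_assoc]
          generalize (13*i+12)*13^k = u at h ⊢
          omega
        · rintro ⟨i, k, hk, h | h⟩
          · exfalso
            obtain ⟨k', rfl⟩ : ∃ k', k = k' + 1 := ⟨k-1, by omega⟩
            rw [pow_succ, ← mul_assoc] at h
            generalize (13*i+1)*13^k' = u at h
            omega
          · obtain ⟨k', rfl⟩ : ∃ k', k = k' + 1 := ⟨k-1, by omega⟩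
            rw [pow_succ, ← mul_assoc] at h
            refine ⟨i, k', ?_⟩
            generalize (13*i+12)*13^k' = u at h ⊢
            omega
end

section
/- The Motzkin number M_n is divisible by 23 if and only if n has one of the forms (23i+21)·23^{2j−1} − 2, (23i+1)·23^{2j} − 2, (23i+2)·23^{2j−1} − 1, or (23i+22)·23^{2j} − 1, where i, j are natural numbers with j ≥ 1. -/
open Finset Polynomial


-- subset split identity
lemma choose_split (n i j : ℕ) :
    n.choose i * (n - i).choose j = n.choose (i + j) * (i + j).choose i := by
  by_cases h : i + j ≤ n
  · have := Nat.choose_mul (n := n) (Nat.le_add_right i j)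
    simpa [Nat.add_sub_cancel_left] using this.symm
  · push_neg at h
    by_cases hi : i ≤ n
    · have h1 : n - i < j := by omega
      rw [Nat.choose_eq_zero_of_lt h1, Nat.choose_eq_zero_of_lt h, mul_zero, zero_mul]
    · push_neg at hi
      rw [Nat.choose_eq_zero_of_lt hi, Nat.choose_eq_zero_of_lt h, zero_mul, zero_mul]

lemma choose_two_succ_eq (k : ℕ) :
    (2 * (k + 1)).choose k = (k + 1) * catalan (k + 1) := by
  have h2 : (2 * (k + 1)).choose (k + 1) = (k + 2) * catalan (k + 1) := by
    have h := succ_mul_catalan_eq_centralBinom (k + 1)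
    simp only [Nat.centralBinom] at h
    ring_nf at h ⊢
    omega
  have h1 := Nat.choose_succ_right_eq (2 * (k + 1)) k
  rw [h2] at h1
  have h3 : 2 * (k + 1) - k = k + 2 := by omega
  rw [h3] at h1
  apply Nat.eq_of_mul_eq_mul_right (show 0 < k + 2 by omega)
  rw [← h1]; ring

lemma coeff_tri_pow (n N : ℕ) :
    ((1 + X + X ^ 2 : ℕ[X]) ^ n).coeff N
      = ∑ m ∈ range (n + 1), n.choose m * (if m ≤ N then m.choose (N - m) else 0) := by
  have h0 : (1 + X + X ^ 2 : ℕ[X]) = (X + X ^ 2) + 1 := by ring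
  rw [h0, add_pow]
  rw [finset_sum_coeff]
  refine Finset.sum_congr rfl fun m hm => ?_
  have h1 : (X + X ^ 2 : ℕ[X]) ^ m = X ^ m * (1 + X) ^ m := by
    rw [← mul_pow]; ring_nf
  rw [one_pow, mul_one, h1, ← Nat.cast_id (n.choose m), ← Polynomial.C_eq_natCast,
    Polynomial.coeff_mul_C, Polynomial.coeff_X_pow_mul', coeff_one_add_X_pow]
  by_cases h : m ≤ N <;> simp [h, mul_comm]

lemma motzkin_add_coeff (n : ℕ) :
    motzkin n + ((1 + X + X ^ 2 : ℕ[X]) ^ n).coeff (n + 2)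
      = ((1 + X + X ^ 2 : ℕ[X]) ^ n).coeff n := by
  rw [coeff_tri_pow n n, coeff_tri_pow n (n + 2)]
  rw [← Finset.sum_range_reflect (fun m => n.choose m * (if m ≤ n then m.choose (n - m) else 0)) (n+1),
      ← Finset.sum_range_reflect (fun m => n.choose m * (if m ≤ n + 2 then m.choose (n + 2 - m) else 0)) (n+1)]
  have hL : ∀ k ∈ range (n+1),
      n.choose (n + 1 - 1 - k) * (if n + 1 - 1 - k ≤ n + 2 then (n + 1 - 1 - k).choose (n + 2 - (n + 1 - 1 - k)) else 0)
        = n.choose (2 * (k+1)) * ((k+1) * catalan (k+1)) := by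
    intro k hk
    simp only [mem_range] at hk
    have hk' : k ≤ n := by omega
    have e1 : n + 1 - 1 - k = n - k := by omega
    have e2 : n - k ≤ n + 2 := by omega
    have e3 : n + 2 - (n - k) = k + 2 := by omega
    rw [e1, if_pos e2, e3, Nat.choose_symm hk', ← choose_two_succ_eq k]
    calc n.choose k * (n - k).choose (k + 2)
        = n.choose (k + (k + 2)) * (k + (k + 2)).choose k := choose_split n k (k+2)
      _ = n.choose (2 * (k + 1)) * (2 * (k + 1)).choose k := by ring_nf
  have hR : ∀ k ∈ range (n+1),
      n.choose (n + 1 - 1 - k) * (if n + 1 - 1 - k ≤ n then (n + 1 - 1 - k).choose (n - (n + 1 - 1 - k)) else 0)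
        = n.choose (2 * k) * ((2 * k).choose k) := by
    intro k hk
    simp only [mem_range] at hk
    have hk' : k ≤ n := by omega
    have e1 : n + 1 - 1 - k = n - k := by omega
    have e2 : n - k ≤ n := by omega
    have e3 : n - (n - k) = k := by omega
    rw [e1, if_pos e2, e3, Nat.choose_symm hk']
    calc n.choose k * (n - k).choose k
        = n.choose (k + k) * (k + k).choose k := choose_split n k k
      _ = n.choose (2 * k) * (2 * k).choose k := by ring_nf
  rw [Finset.sum_congr rfl hL, Finset.sum_congr rfl hR]
  -- now: motzkin n + ∑_{k<n+1} C(n,2(k+1))·(k+1)·cat(k+1) = ∑_{k<n+1} C(n,2k)·C(2k,k)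
  have hshift : ∑ k ∈ range (n+1), n.choose (2 * (k+1)) * ((k+1) * catalan (k+1))
      = ∑ k ∈ range (n+1), n.choose (2 * k) * (k * catalan k) := by
    have h0 : ∑ k ∈ range (n+2), n.choose (2*k) * (k * catalan k)
        = ∑ k ∈ range (n+1), n.choose (2 * (k+1)) * ((k+1) * catalan (k+1)) + n.choose (2*0) * (0 * catalan 0) :=
      Finset.sum_range_succ' _ (n+1)
    have h1 : ∑ k ∈ range (n+2), n.choose (2*k) * (k * catalan k)
        = ∑ k ∈ range (n+1), n.choose (2*k) * (k * catalan k) + n.choose (2*(n+1)) * ((n+1) * catalan (n+1)) :=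
      Finset.sum_range_succ _ (n+1)
    have h2 : n.choose (2*(n+1)) = 0 := Nat.choose_eq_zero_of_lt (by omega)
    rw [h2, zero_mul] at h1
    omega
  rw [hshift, motzkin, ← Finset.sum_add_distrib]
  refine Finset.sum_congr rfl fun k _ => ?_
  have h : (2 * k).choose k = (k + 1) * catalan k := by
    have h := succ_mul_catalan_eq_centralBinom k
    simp only [Nat.centralBinom] at h
    ring_nf at h ⊢
    omega
  rw [h]; ring



def nextRow (l : List ℕ) : List ℕ :=
  (List.range (l.length + 2)).map fun j =>
    l.getD j 0 + (if 1 ≤ j then l.getD (j - 1) 0 else 0)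
      + (if 2 ≤ j then l.getD (j - 2) 0 else 0)

def triRow : ℕ → List ℕ
  | 0 => [1]
  | n + 1 => nextRow (triRow n)

lemma nextRow_getD (l : List ℕ) (j : ℕ) :
    (nextRow l).getD j 0 = l.getD j 0 + (if 1 ≤ j then l.getD (j - 1) 0 else 0)
      + (if 2 ≤ j then l.getD (j - 2) 0 else 0) := by
  by_cases h : j < l.length + 2
  · rw [nextRow, List.getD_eq_getElem?_getD, List.getElem?_map, List.getElem?_range h]
    simp
  · push_neg at h
    have h1 : ∀ i, l.length ≤ i → l.getD i 0 = 0 := fun i hi =>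
      List.getD_eq_default _ _ hi
    rw [List.getD_eq_default, h1 j (by omega)]
    · rw [show (if 1 ≤ j then l.getD (j-1) 0 else 0) = 0 by
        rcases Nat.lt_or_ge j 1 with h'|h'
        · simp [Nat.not_le_of_lt h']
        · rw [if_pos h', h1 _ (by omega)]]
      rw [show (if 2 ≤ j then l.getD (j-2) 0 else 0) = 0 by
        rcases Nat.lt_or_ge j 2 with h'|h'
        · simp [Nat.not_le_of_lt h']
        · rw [if_pos h', h1 _ (by omega)]]
    · simp [nextRow]; omega

lemma coeff_tri_mul (q : ℕ[X]) (j : ℕ) :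
    ((1 + X + X ^ 2) * q).coeff j
      = q.coeff j + (if 1 ≤ j then q.coeff (j - 1) else 0)
        + (if 2 ≤ j then q.coeff (j - 2) else 0) := by
  rw [add_mul, add_mul, one_mul]
  rw [Polynomial.coeff_add, Polynomial.coeff_add]
  congr 1
  · congr 1
    rcases Nat.lt_or_ge j 1 with h|h
    · interval_cases j
      simp
    · rw [if_pos h, ← pow_one (X : ℕ[X]), Polynomial.coeff_X_pow_mul']
      simp [h]
  · rw [Polynomial.coeff_X_pow_mul']

lemma coeff_eq_triRow (n j : ℕ) :
    ((1 + X + X ^ 2 : ℕ[X]) ^ n).coeff j = (triRow n).getD j 0 := by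
  induction n generalizing j with
  | zero =>
    simp only [pow_zero, triRow]
    rcases j with _|j
    · simp
    · simp [Polynomial.coeff_one]
  | succ n ih =>
    rw [pow_succ, mul_comm, coeff_tri_mul, triRow, nextRow_getD, ih, ih, ih]

instance : Fact (Nat.Prime 23) := ⟨by norm_num⟩
abbrev K := ZMod 23

noncomputable def Q : Polynomial K := 1 + X + X ^ 2

lemma natDegree_Q_pow (r : ℕ) : (Q ^ r).natDegree ≤ 2 * r := by
  have h2 : Q.natDegree ≤ 2 := by
    apply le_trans (Polynomial.natDegree_add_le _ _)
    simp [Polynomial.natDegree_add_le, le_trans (Polynomial.natDegree_add_le 1 X)]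
  calc (Q ^ r).natDegree ≤ r * Q.natDegree := Polynomial.natDegree_pow_le
    _ ≤ r * 2 := Nat.mul_le_mul_left r h2
    _ = 2 * r := by ring

lemma coeff_expand_mul (f g : Polynomial K) (hg : g.natDegree ≤ 44) (u s : ℕ) (hs : s ≤ 22) :
    ((Polynomial.expand K 23 f) * g).coeff (23 * u + s)
      = f.coeff u * g.coeff s
        + (if 1 ≤ u then f.coeff (u - 1) * g.coeff (s + 23) else 0) := by
  rw [Polynomial.coeff_mul, Finset.Nat.sum_antidiagonal_eq_sum_range_succ_mk]
  have hterm : ∀ i ∈ range (23 * u + s + 1),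
      (Polynomial.expand K 23 f).coeff i * g.coeff (23 * u + s - i)
        = (if i = 23 * u then f.coeff u * g.coeff s else 0)
          + (if 1 ≤ u ∧ i = 23 * (u - 1) then f.coeff (u - 1) * g.coeff (s + 23) else 0) := by
    intro i hi
    simp only [mem_range] at hi
    rw [Polynomial.coeff_expand (by norm_num : 0 < 23)]
    by_cases hdvd : 23 ∣ i
    · obtain ⟨v, rfl⟩ := hdvd
      have hvu : v ≤ u := by omega
      rw [if_pos ⟨v, rfl⟩]
      rcases Nat.lt_or_ge v u with hv | hv
      · rcases Nat.lt_or_ge v (u - 1) with hv2 | hv2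
        · -- low v : coeff of g vanishes
          have hdeg : g.natDegree < 23 * u + s - 23 * v := by omega
          rw [Polynomial.coeff_eq_zero_of_natDegree_lt hdeg, mul_zero]
          rw [if_neg (by omega), if_neg (by omega)]
          simp
        · -- v = u - 1, u ≥ 1
          have hv3 : v = u - 1 := by omega
          have hu1 : 1 ≤ u := by omega
          rw [if_neg (by omega), if_pos ⟨hu1, by omega⟩]
          have e1 : 23 * v / 23 = v := by omega
          have e2 : 23 * u + s - 23 * v = s + 23 := by omega
          rw [e1, e2, hv3, zero_add]
      · have hv3 : v = u := le_antisymm hvu hv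
        subst hv3
        rw [if_pos rfl, if_neg (by omega)]
        have e1 : 23 * v / 23 = v := by omega
        have e2 : 23 * v + s - 23 * v = s := by omega
        rw [e1, e2, add_zero]
    · rw [if_neg hdvd, zero_mul, if_neg (by omega), if_neg ?_]
      · simp
      · rintro ⟨h1, rfl⟩
        exact hdvd ⟨u - 1, rfl⟩
  rw [Finset.sum_congr rfl hterm, Finset.sum_add_distrib]
  congr 1
  · rw [Finset.sum_ite_eq' (range (23 * u + s + 1))]
    rw [if_pos (by simp)]
  · by_cases hu : 1 ≤ u
    · simp only [hu, true_and]
      rw [Finset.sum_ite_eq' (range (23 * u + s + 1))]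
      rw [if_pos (by simp; omega)]
      simp
    · simp [hu]

lemma Q_pow_digit (n r : ℕ) :
    Q ^ (23 * n + r) = (Polynomial.expand K 23 (Q ^ n)) * Q ^ r := by
  rw [pow_add]
  congr 1
  rw [pow_mul', ← Polynomial.map_frobenius_expand 23 (Q ^ n), ZMod.frobenius_zmod, Polynomial.map_id]

def cK (r j : ℕ) : K := ((triRow r).getD j 0 : ℕ)

lemma coeff_Q_pow_eq' (r j : ℕ) : (Q ^ r).coeff j = cK r j := by
  have hQ : Q = Polynomial.map (Nat.castRingHom K) (1 + X + X ^ 2 : ℕ[X]) := by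
    simp [Q]
  rw [hQ, ← Polynomial.map_pow, Polynomial.coeff_map, coeff_eq_triRow]
  rfl

lemma coeff_low (n r d : ℕ) (hrd : r + d ≤ 22) :
    (Q ^ (23 * n + r)).coeff (23 * n + r + d)
      = (Q ^ n).coeff n * (Q ^ r).coeff (r + d) := by
  have hr : r ≤ 22 := by omega
  have h := coeff_expand_mul (Q ^ n) (Q ^ r) (le_trans (natDegree_Q_pow r) (by omega))
    n (r + d) hrd
  rw [show 23 * n + (r + d) = 23 * n + r + d by omega] at h
  rw [← Q_pow_digit] at h
  rw [h]
  have hz : (Q ^ r).coeff (r + d + 23) = 0 :=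
    Polynomial.coeff_eq_zero_of_natDegree_lt (lt_of_le_of_lt (natDegree_Q_pow r) (by omega))
  rw [hz]
  simp

lemma coeff_high (n r d : ℕ) (h1 : 23 ≤ r + d) (h2 : r + d ≤ 45) (hr : r ≤ 22) :
    (Q ^ (23 * n + r)).coeff (23 * n + r + d)
      = (Q ^ n).coeff (n + 1) * (Q ^ r).coeff (r + d - 23)
        + (Q ^ n).coeff n * (Q ^ r).coeff (r + d) := by
  have h := coeff_expand_mul (Q ^ n) (Q ^ r) (le_trans (natDegree_Q_pow r) (by omega))
    (n + 1) (r + d - 23) (by omega)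
  rw [show 23 * (n + 1) + (r + d - 23) = 23 * n + r + d by omega] at h
  rw [← Q_pow_digit] at h
  rw [h, if_pos (by omega)]
  simp only [Nat.add_sub_cancel]
  rw [show r + d - 23 + 23 = r + d by omega]

noncomputable def XX (n : ℕ) : K := (Q ^ n).coeff n
noncomputable def YY (n : ℕ) : K := (Q ^ n).coeff (n + 1)
noncomputable def ZZ (n : ℕ) : K := (Q ^ n).coeff (n + 2)

lemma TX (n r : ℕ) (hr : r ≤ 22) : XX (23 * n + r) = XX n * cK r r := by
  have h := coeff_low n r 0 (by omega)
  rw [add_zero, add_zero] at h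
  simp only [XX]
  rw [h]
  simp only [coeff_Q_pow_eq']

lemma TY_low (n r : ℕ) (hr : r ≤ 21) : YY (23 * n + r) = XX n * cK r (r + 1) := by
  have h := coeff_low n r 1 (by omega)
  simp only [YY, XX]
  rw [h]
  simp only [coeff_Q_pow_eq']

lemma TY22 (n : ℕ) : YY (23 * n + 22) = YY n + XX n := by
  have h := coeff_high n 22 1 (by omega) (by omega) (by omega)
  norm_num at h
  simp only [YY, XX]
  rw [h]
  simp only [coeff_Q_pow_eq']
  rw [show cK 22 0 = 1 by decide, show cK 22 23 = 1 by decide]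
  ring

lemma TZ_low (n r : ℕ) (hr : r ≤ 20) : ZZ (23 * n + r) = XX n * cK r (r + 2) := by
  have h := coeff_low n r 2 (by omega)
  simp only [ZZ, XX]
  rw [h]
  simp only [coeff_Q_pow_eq']

lemma TZ21 (n : ℕ) : ZZ (23 * n + 21) = YY n + 9 * XX n := by
  have h := coeff_high n 21 2 (by omega) (by omega) (by omega)
  norm_num at h
  simp only [ZZ, XX, YY]
  rw [h]
  simp only [coeff_Q_pow_eq']
  rw [show cK 21 0 = 1 by decide, show cK 21 23 = 9 by decide]
  ring

lemma TZ22 (n : ℕ) : ZZ (23 * n + 22) = 22 * YY n := by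
  have h := coeff_high n 22 2 (by omega) (by omega) (by omega)
  norm_num at h
  simp only [ZZ, XX, YY]
  rw [h]
  simp only [coeff_Q_pow_eq']
  rw [show cK 22 1 = 22 by decide, show cK 22 24 = 0 by decide]
  ring

lemma XX_ne (n : ℕ) : XX n ≠ 0 := by
  induction n using Nat.strong_induction_on with
  | _ n ih =>
    by_cases h0 : n = 0
    · subst h0
      simp only [XX, pow_zero]
      simp
    · have hq : n / 23 < n := Nat.div_lt_self (by omega) (by norm_num)
      have h := TX (n / 23) (n % 23) (by omega)
      rw [show 23 * (n / 23) + n % 23 = n from Nat.div_add_mod n 23] at h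
      rw [h]
      exact mul_ne_zero (ih _ hq)
        ((by decide : ∀ r, r ≤ 22 → cK r r ≠ 0) (n % 23) (by omega))

lemma W_iff (c : K) (q : ℕ) :
    (YY q = c * XX q)
      ↔ ((q % 23 ≤ 21 ∧ cK (q % 23) (q % 23 + 1) = c * cK (q % 23) (q % 23))
          ∨ (q % 23 = 22 ∧ YY (q / 23) = (22 * c - 1) * XX (q / 23))) := by
  obtain ⟨p, r, hr, rfl⟩ : ∃ p r, r < 23 ∧ q = 23 * p + r :=
    ⟨q / 23, q % 23, Nat.mod_lt _ (by norm_num), (Nat.div_add_mod q 23).symm⟩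
  have hmod : (23 * p + r) % 23 = r := by omega
  have hdiv : (23 * p + r) / 23 = p := by omega
  rw [hmod, hdiv]
  rcases Nat.lt_or_ge r 22 with h | h
  · have h21 : r ≤ 21 := by omega
    rw [TX p r (by omega), TY_low p r h21]
    constructor
    · intro hE
      refine Or.inl ⟨h21, ?_⟩
      apply mul_left_cancel₀ (XX_ne p)
      calc XX p * cK r (r + 1) = c * (XX p * cK r r) := hE
        _ = XX p * (c * cK r r) := by ring
    · rintro (⟨-, hc⟩ | ⟨h22, -⟩)
      · rw [hc]; ring
      · omega
  · have h22 : r = 22 := by omega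
    subst h22
    rw [TX p 22 (by omega), TY22 p, show cK 22 22 = 22 by decide]
    constructor
    · intro hE
      exact Or.inr ⟨rfl, by linear_combination hE⟩
    · rintro (⟨h', -⟩ | ⟨-, hE⟩)
      · omega
      · linear_combination hE


def GG (a b q : ℕ) : Prop :=
  ∃ i e : ℕ, q + 1 = (23 * i + a) * 23 ^ (2 * e) ∨ q + 1 = (23 * i + b) * 23 ^ (2 * e + 1)

lemma GG_iff (a b : ℕ) (ha1 : 1 ≤ a) (ha2 : a ≤ 22) (q : ℕ) :
    GG a b q ↔ (q % 23 = a - 1 ∨ (q % 23 = 22 ∧ GG b a (q / 23))) := by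
  constructor
  · rintro ⟨i, e, h | h⟩
    · rcases Nat.eq_zero_or_pos e with he | he
      · subst he
        left
        simp only [Nat.mul_zero, pow_zero, mul_one] at h
        omega
      · right
        rw [show (23:ℕ) ^ (2 * e) = 23 ^ (2 * (e - 1) + 1) * 23 by
          rw [← pow_succ]; congr 1; omega, ← mul_assoc] at h
        set T := (23 * i + a) * 23 ^ (2 * (e - 1) + 1) with hT
        exact ⟨by omega, ⟨i, e - 1, Or.inr (by omega)⟩⟩
    · right
      rw [pow_succ, ← mul_assoc] at h
      set T := (23 * i + b) * 23 ^ (2 * e) with hT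
      exact ⟨by omega, ⟨i, e, Or.inl (by omega)⟩⟩
  · rintro (h | ⟨h22, i, e, h | h⟩)
    · exact ⟨q / 23, 0, Or.inl (by simp only [Nat.mul_zero, pow_zero, mul_one]; omega)⟩
    · refine ⟨i, e, Or.inr ?_⟩
      rw [pow_succ, ← mul_assoc]
      set T := (23 * i + b) * 23 ^ (2 * e) with hT
      omega
    · refine ⟨i, e + 1, Or.inl ?_⟩
      rw [show (23:ℕ) ^ (2 * (e + 1)) = 23 ^ (2 * e + 1) * 23 by
        rw [show 2 * (e + 1) = (2 * e + 1) + 1 from by omega, pow_succ], ← mul_assoc]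
      set T := (23 * i + a) * 23 ^ (2 * e + 1) with hT
      omega

lemma master (q : ℕ) :
    (YY q = 22 * XX q ↔ GG 21 1 q) ∧ (YY q = 0 ↔ GG 1 21 q)
      ∧ (YY q = XX q ↔ GG 2 22 q) ∧ (YY q = 21 * XX q ↔ GG 22 2 q) := by
  induction q using Nat.strong_induction_on with
  | _ q ih =>
  have c22 : ∀ r, r ≤ 21 → (cK r (r + 1) = 22 * cK r r ↔ r = 20) := by decide
  have c0 : ∀ r, r ≤ 21 → (cK r (r + 1) = 0 * cK r r ↔ r = 0) := by decide
  have c1 : ∀ r, r ≤ 21 → (cK r (r + 1) = 1 * cK r r ↔ r = 1) := by decide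
  have c21 : ∀ r, r ≤ 21 → (cK r (r + 1) = 21 * cK r r ↔ r = 21) := by decide
  have hdivlt : q % 23 = 22 → q / 23 < q := fun h => Nat.div_lt_self (by omega) (by norm_num)
  refine ⟨?_, ?_, ?_, ?_⟩
  · rw [W_iff 22 q, GG_iff 21 1 (by norm_num) (by norm_num),
      show ((22:K) * 22 - 1) = 0 by decide, zero_mul]
    constructor
    · rintro (⟨hle, hc⟩ | ⟨h22, hY⟩)
      · have := (c22 _ hle).mp hc; omega
      · exact Or.inr ⟨h22, ((ih _ (hdivlt h22)).2.1).mp hY⟩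
    · rintro (h20 | ⟨h22, hG⟩)
      · exact Or.inl ⟨by omega, (c22 _ (by omega)).mpr (by omega)⟩
      · exact Or.inr ⟨h22, ((ih _ (hdivlt h22)).2.1).mpr hG⟩
  · rw [show (YY q = 0) ↔ (YY q = 0 * XX q) by rw [zero_mul],
      W_iff 0 q, GG_iff 1 21 (by norm_num) (by norm_num),
      show ((22:K) * 0 - 1) = 22 by decide]
    constructor
    · rintro (⟨hle, hc⟩ | ⟨h22, hY⟩)
      · have := (c0 _ hle).mp hc; omega
      · exact Or.inr ⟨h22, ((ih _ (hdivlt h22)).1).mp hY⟩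
    · rintro (h0 | ⟨h22, hG⟩)
      · exact Or.inl ⟨by omega, (c0 _ (by omega)).mpr (by omega)⟩
      · exact Or.inr ⟨h22, ((ih _ (hdivlt h22)).1).mpr hG⟩
  · rw [show (YY q = XX q) ↔ (YY q = 1 * XX q) by rw [one_mul],
      W_iff 1 q, GG_iff 2 22 (by norm_num) (by norm_num),
      show ((22:K) * 1 - 1) = 21 by decide]
    constructor
    · rintro (⟨hle, hc⟩ | ⟨h22, hY⟩)
      · have := (c1 _ hle).mp hc; omega
      · exact Or.inr ⟨h22, ((ih _ (hdivlt h22)).2.2.2).mp hY⟩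
    · rintro (h1 | ⟨h22, hG⟩)
      · exact Or.inl ⟨by omega, (c1 _ (by omega)).mpr (by omega)⟩
      · exact Or.inr ⟨h22, ((ih _ (hdivlt h22)).2.2.2).mpr hG⟩
  · rw [W_iff 21 q, GG_iff 22 2 (by norm_num) (by norm_num),
      show ((22:K) * 21 - 1) = 1 by decide, one_mul]
    constructor
    · rintro (⟨hle, hc⟩ | ⟨h22, hY⟩)
      · have := (c21 _ hle).mp hc; omega
      · exact Or.inr ⟨h22, ((ih _ (hdivlt h22)).2.2.1).mp hY⟩
    · rintro (h21 | ⟨h22, hG⟩)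
      · exact Or.inl ⟨by omega, (c21 _ (by omega)).mpr (by omega)⟩
      · exact Or.inr ⟨h22, ((ih _ (hdivlt h22)).2.2.1).mpr hG⟩

theorem motzkin_mod_twentythree (n : ℕ) :
    23 ∣ motzkin n ↔
      ∃ i j : ℕ, 1 ≤ j ∧
        (n + 2 = (23 * i + 21) * 23 ^ (2 * j - 1) ∨
         n + 2 = (23 * i + 1) * 23 ^ (2 * j) ∨
         n + 1 = (23 * i + 2) * 23 ^ (2 * j - 1) ∨
         n + 1 = (23 * i + 22) * 23 ^ (2 * j)) := by
  have h23 : (23 : K) = 0 := by decide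
  have hdvd : 23 ∣ motzkin n ↔ XX n = ZZ n := by
    have h := motzkin_add_coeff n
    rw [coeff_eq_triRow, coeff_eq_triRow] at h
    have h2 : ((motzkin n + (triRow n).getD (n + 2) 0 : ℕ) : K)
        = (((triRow n).getD n 0 : ℕ) : K) := by rw [h]
    push_cast at h2
    have hX : XX n = (((triRow n).getD n 0 : ℕ) : K) := by
      rw [XX, coeff_Q_pow_eq']; rfl
    have hZ : ZZ n = (((triRow n).getD (n + 2) 0 : ℕ) : K) := by
      rw [ZZ, coeff_Q_pow_eq']; rfl
    rw [← ZMod.natCast_eq_zero_iff]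
    constructor
    · intro hm
      rw [hX, hZ]; linear_combination hm - h2
    · intro hxz
      rw [hX, hZ] at hxz
      linear_combination h2 + hxz
  by_cases h21 : n % 23 = 21
  · obtain ⟨p, rfl⟩ : ∃ p, n = 23 * p + 21 := ⟨n / 23, by omega⟩
    rw [hdvd, TX p 21 (by omega), TZ21 p, show cK 21 21 = 8 by decide]
    have hiff : (XX p * 8 = YY p + 9 * XX p) ↔ YY p = 22 * XX p := by
      constructor <;> intro h
      · linear_combination -h - XX p * h23
      · linear_combination -h - XX p * h23
    rw [hiff, (master p).1]
    constructor
    · rintro ⟨i, e, h | h⟩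
      · refine ⟨i, e + 1, by omega, Or.inl ?_⟩
        rw [show 2 * (e + 1) - 1 = (2 * e) + 1 from by omega, pow_succ, ← mul_assoc]
        set T := (23 * i + 21) * 23 ^ (2 * e) with hT
        omega
      · refine ⟨i, e + 1, by omega, Or.inr (Or.inl ?_)⟩
        rw [show 2 * (e + 1) = (2 * e + 1) + 1 from by omega, pow_succ, ← mul_assoc]
        set T := (23 * i + 1) * 23 ^ (2 * e + 1) with hT
        omega
    · rintro ⟨i, j, hj, h | h | h | h⟩
      · refine ⟨i, j - 1, Or.inl ?_⟩
        rw [show 2 * j - 1 = (2 * (j - 1)) + 1 from by omega, pow_succ, ← mul_assoc] at h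
        set T := (23 * i + 21) * 23 ^ (2 * (j - 1)) with hT
        omega
      · refine ⟨i, j - 1, Or.inr ?_⟩
        rw [show 2 * j = (2 * (j - 1) + 1) + 1 from by omega, pow_succ, ← mul_assoc] at h
        set T := (23 * i + 1) * 23 ^ (2 * (j - 1) + 1) with hT
        omega
      · exfalso
        rw [show 2 * j - 1 = (2 * j - 2) + 1 from by omega, pow_succ, ← mul_assoc] at h
        set T := (23 * i + 2) * 23 ^ (2 * j - 2) with hT
        omega
      · exfalso
        rw [show 2 * j = (2 * j - 1) + 1 from by omega, pow_succ, ← mul_assoc] at h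
        set T := (23 * i + 22) * 23 ^ (2 * j - 1) with hT
        omega
  · by_cases h22 : n % 23 = 22
    · obtain ⟨p, rfl⟩ : ∃ p, n = 23 * p + 22 := ⟨n / 23, by omega⟩
      rw [hdvd, TX p 22 (by omega), TZ22 p, show cK 22 22 = 22 by decide]
      have hiff : (XX p * 22 = 22 * YY p) ↔ YY p = XX p := by
        constructor <;> intro h
        · linear_combination h + (YY p - XX p) * h23
        · linear_combination (-22 : K) * h
      rw [hiff, (master p).2.2.1]
      constructor
      · rintro ⟨i, e, h | h⟩
        · refine ⟨i, e + 1, by omega, Or.inr (Or.inr (Or.inl ?_))⟩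
          rw [show 2 * (e + 1) - 1 = 2 * e + 1 from by omega, pow_succ, ← mul_assoc]
          set T := (23 * i + 2) * 23 ^ (2 * e) with hT
          omega
        · refine ⟨i, e + 1, by omega, Or.inr (Or.inr (Or.inr ?_))⟩
          rw [show 2 * (e + 1) = (2 * e + 1) + 1 from by omega, pow_succ, ← mul_assoc]
          set T := (23 * i + 22) * 23 ^ (2 * e + 1) with hT
          omega
      · rintro ⟨i, j, hj, h | h | h | h⟩
        · exfalso
          rw [show 2 * j - 1 = (2 * j - 2) + 1 from by omega, pow_succ, ← mul_assoc] at h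
          set T := (23 * i + 21) * 23 ^ (2 * j - 2) with hT
          omega
        · exfalso
          rw [show 2 * j = (2 * j - 1) + 1 from by omega, pow_succ, ← mul_assoc] at h
          set T := (23 * i + 1) * 23 ^ (2 * j - 1) with hT
          omega
        · refine ⟨i, j - 1, Or.inl ?_⟩
          rw [show 2 * j - 1 = 2 * (j - 1) + 1 from by omega, pow_succ, ← mul_assoc] at h
          set T := (23 * i + 2) * 23 ^ (2 * (j - 1)) with hT
          omega
        · refine ⟨i, j - 1, Or.inr ?_⟩
          rw [show 2 * j = (2 * (j - 1) + 1) + 1 from by omega, pow_succ, ← mul_assoc] at h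
          set T := (23 * i + 22) * 23 ^ (2 * (j - 1) + 1) with hT
          omega
    · obtain ⟨p, r, hr, rfl⟩ : ∃ p r, r ≤ 20 ∧ n = 23 * p + r :=
        ⟨n / 23, n % 23, by omega, by omega⟩
      rw [hdvd, TX p r (by omega), TZ_low p r hr]
      constructor
      · intro h
        exfalso
        have hc := mul_left_cancel₀ (XX_ne p) h
        exact ((by decide : ∀ r', r' ≤ 20 → cK r' r' ≠ cK r' (r' + 2)) r hr) hc
      · rintro ⟨i, j, hj, h | h | h | h⟩
        · exfalso
          rw [show 2 * j - 1 = (2 * j - 2) + 1 from by omega, pow_succ, ← mul_assoc] at h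
          set T := (23 * i + 21) * 23 ^ (2 * j - 2) with hT
          omega
        · exfalso
          rw [show 2 * j = (2 * j - 1) + 1 from by omega, pow_succ, ← mul_assoc] at h
          set T := (23 * i + 1) * 23 ^ (2 * j - 1) with hT
          omega
        · exfalso
          rw [show 2 * j - 1 = (2 * j - 2) + 1 from by omega, pow_succ, ← mul_assoc] at h
          set T := (23 * i + 2) * 23 ^ (2 * j - 2) with hT
          omega
        · exfalso
          rw [show 2 * j = (2 * j - 1) + 1 from by omega, pow_succ, ← mul_assoc] at h
          set T := (23 * i + 22) * 23 ^ (2 * j - 1) with hT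
          omega
end
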